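/- Suppose F(w,q) ∈ P (power series in q with constant term 1 whose coefficients are rational functions in w holomorphic at w = 0) satisfies (Σ_{r=0}^m C_r(q) D_w^r) F(w,q) = A(w,q) for power series C_0,…,C_m ∈ Q[[q]] and A(w,q) ∈ Q(w)[[q]] with A(0,q) = 0. Then (Σ_{s=0}^{m−1} C̃_s(q) D_w^s)(M F)(w,q) = A(w,q)/w, where C̃_s(q) = Σ_{r=s+1}^m binom(r, s+1) C_r(q) D^{r−1−s}F(0,q), D = q d/dq, and M F(w,q) = (1 + (q/w) d/dq)(F(w,q)/F(0,q)). -/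

import Mathlib

open PowerSeries Polynomial

noncomputable section

/-- evaluation at `w = 0`, coefficientwise in `q`: `F(w,q) ↦ F(0,q)`. -/
def ev0 (F : PowerSeries (RatFunc ℚ)) : PowerSeries ℚ :=
  PowerSeries.mk fun d => RatFunc.eval (RingHom.id ℚ) 0 (PowerSeries.coeff d F)

/-- the operator `M F = {1 + (q/w) d/dq}(F/F(0,q))`: the coefficient of `q^d` in
`F/F(0,q)` gets multiplied by `(w+d)/w`. -/
def Mop (F : PowerSeries (RatFunc ℚ)) : PowerSeries (RatFunc ℚ) :=
  PowerSeries.mk fun d =>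
    (RatFunc.X + (d : RatFunc ℚ)) / RatFunc.X *
      PowerSeries.coeff d
        (F * PowerSeries.map (algebraMap ℚ (RatFunc ℚ)) (ev0 F)⁻¹)

/-- the operator `D_w = q d/dq + w`. -/
def Dw (F : PowerSeries (RatFunc ℚ)) : PowerSeries (RatFunc ℚ) :=
  PowerSeries.mk fun d => (RatFunc.X + (d : RatFunc ℚ)) * PowerSeries.coeff d F

/-- `D = q d/dq` on `ℚ[[q]]`. -/
def Dq (F : PowerSeries ℚ) : PowerSeries ℚ :=
  PowerSeries.mk fun d => (d : ℚ) * PowerSeries.coeff d F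

end

noncomputable section Aux

open Finset

private def ev (x : RatFunc ℚ) : ℚ := RatFunc.eval (RingHom.id ℚ) 0 x

private def Holo (x : RatFunc ℚ) : Prop := x.denom.eval 0 ≠ 0

private lemma holo_add {x y : RatFunc ℚ} (hx : Holo x) (hy : Holo y) : Holo (x + y) :=
  ne_zero_of_dvd_ne_zero (by simpa using mul_ne_zero hx hy)
    (Polynomial.eval_dvd (RatFunc.denom_add_dvd x y))

private lemma holo_mul {x y : RatFunc ℚ} (hx : Holo x) (hy : Holo y) : Holo (x * y) :=
  ne_zero_of_dvd_ne_zero (by simpa using mul_ne_zero hx hy)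
    (Polynomial.eval_dvd (RatFunc.denom_mul_dvd x y))

private lemma holo_algP (p : ℚ[X]) : Holo (algebraMap ℚ[X] (RatFunc ℚ) p) := by
  unfold Holo; rw [RatFunc.denom_algebraMap]; simp

private lemma ev_algP (p : ℚ[X]) :
    ev (algebraMap ℚ[X] (RatFunc ℚ) p) = p.eval 0 := by
  unfold ev; rw [RatFunc.eval_algebraMap]; simp [Polynomial.eval]

private lemma ev_add {x y : RatFunc ℚ} (hx : Holo x) (hy : Holo y) :
    ev (x + y) = ev x + ev y := by
  exact RatFunc.eval_add (f := RingHom.id ℚ) (a := 0) hx hy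

private lemma ev_mul {x y : RatFunc ℚ} (hx : Holo x) (hy : Holo y) :
    ev (x * y) = ev x * ev y := by
  exact RatFunc.eval_mul (f := RingHom.id ℚ) (a := 0) hx hy

private lemma holo_sum {ι : Type*} (s : Finset ι) (g : ι → RatFunc ℚ)
    (h : ∀ i ∈ s, Holo (g i)) : Holo (∑ i ∈ s, g i) := by
  classical
  induction s using Finset.cons_induction with
  | empty => unfold Holo; simp
  | cons a s ha ih =>
    rw [Finset.sum_cons]
    exact holo_add (h a (by simp)) (ih fun i hi => h i (by simp [hi]))

private lemma ev_sum {ι : Type*} (s : Finset ι) (g : ι → RatFunc ℚ)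
    (h : ∀ i ∈ s, Holo (g i)) : ev (∑ i ∈ s, g i) = ∑ i ∈ s, ev (g i) := by
  classical
  induction s using Finset.cons_induction with
  | empty => unfold ev; simp
  | cons a s ha ih =>
    rw [Finset.sum_cons, Finset.sum_cons,
      ev_add (h a (by simp)) (holo_sum s g fun i hi => h i (by simp [hi])),
      ih fun i hi => h i (by simp [hi])]

private lemma coeff_Dw_iter (r d : ℕ) (G : PowerSeries (RatFunc ℚ)) :
    PowerSeries.coeff d (Dw^[r] G)
      = (RatFunc.X + (d : RatFunc ℚ)) ^ r * PowerSeries.coeff d G := by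
  induction r with
  | zero => simp
  | succ n ih =>
    rw [Function.iterate_succ_apply', Dw, PowerSeries.coeff_mk, ih, pow_succ]; ring

private lemma coeff_Dq_iter (r d : ℕ) (g : PowerSeries ℚ) :
    PowerSeries.coeff d (Dq^[r] g) = (d : ℚ) ^ r * PowerSeries.coeff d g := by
  induction r with
  | zero => simp
  | succ n ih =>
    rw [Function.iterate_succ_apply', Dq, PowerSeries.coeff_mk, ih, pow_succ]; ring

private lemma term_eq (c : ℚ) (j r : ℕ) (x : RatFunc ℚ) :
    algebraMap ℚ (RatFunc ℚ) c * ((RatFunc.X + (j : RatFunc ℚ)) ^ r * x)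
      = algebraMap ℚ[X] (RatFunc ℚ) (Polynomial.C c * (Polynomial.X + (j : ℚ[X])) ^ r) * x := by
  rw [map_mul, map_pow, map_add, map_natCast, RatFunc.algebraMap_X,
    IsScalarTower.algebraMap_apply ℚ ℚ[X] (RatFunc ℚ), Polynomial.algebraMap_eq]
  ring

private lemma holo_term (c : ℚ) (j r : ℕ) {x : RatFunc ℚ} (hx : Holo x) :
    Holo (algebraMap ℚ (RatFunc ℚ) c * ((RatFunc.X + (j : RatFunc ℚ)) ^ r * x)) := by
  rw [term_eq]; exact holo_mul (holo_algP _) hx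

private lemma ev_term (c : ℚ) (j r : ℕ) {x : RatFunc ℚ} (hx : Holo x) :
    ev (algebraMap ℚ (RatFunc ℚ) c * ((RatFunc.X + (j : RatFunc ℚ)) ^ r * x))
      = c * ((j : ℚ) ^ r * ev x) := by
  rw [term_eq, ev_mul (holo_algP _) hx, ev_algP]
  rw [Polynomial.eval_mul, Polynomial.eval_C, Polynomial.eval_pow, Polynomial.eval_add,
    Polynomial.eval_X, Polynomial.eval_natCast]
  ring

private lemma leibniz (g : PowerSeries ℚ) (H : PowerSeries (RatFunc ℚ)) (r : ℕ) :
    Dw^[r] (PowerSeries.map (algebraMap ℚ (RatFunc ℚ)) g * H)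
      = ∑ k ∈ Finset.range (r + 1),
          PowerSeries.C (algebraMap ℚ (RatFunc ℚ) (r.choose k : ℚ)) *
            (PowerSeries.map (algebraMap ℚ (RatFunc ℚ)) (Dq^[r - k] g) * Dw^[k] H) := by
  ext d
  simp only [map_sum, PowerSeries.coeff_C_mul]
  simp only [coeff_Dw_iter, PowerSeries.coeff_mul, PowerSeries.coeff_map, coeff_Dq_iter,
    Finset.mul_sum]
  rw [Finset.sum_comm]
  apply Finset.sum_congr rfl
  intro p hp
  have hp' : p.1 + p.2 = d := Finset.HasAntidiagonal.mem_antidiagonal.mp hp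
  have key : (RatFunc.X + (d : RatFunc ℚ)) ^ r
      = ((RatFunc.X + (p.2 : RatFunc ℚ)) + (p.1 : RatFunc ℚ)) ^ r := by
    rw [← hp']; push_cast; ring_nf
  rw [key, add_pow, Finset.sum_mul]
  apply Finset.sum_congr rfl
  intro k hk
  simp only [map_mul, map_pow, map_natCast]
  ring

end Aux

/-- Lemma `ode_cor`, Corollary 2.2 of Zagier–Zinger.
If `F ∈ P` (constant term 1 in `q`, coefficients holomorphic at `w = 0`) satisfies
`(Σ_{r=0}^m C_r(q) D_w^r) F = A` with `A(0,q) ≡ 0` (and `A` holomorphic at `w = 0`), then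
`(Σ_{s=0}^{m−1} C̃_s(q) D_w^s)(M F) = A/w` where
`C̃_s = Σ_{r=s+1}^m binom(r,s+1) C_r D^{r−1−s} F(0,q)`. -/
theorem ode_descent (m : ℕ) (F A : PowerSeries (RatFunc ℚ)) (Cc : ℕ → PowerSeries ℚ)
    (hF1 : PowerSeries.coeff 0 F = 1)
    (hFhol : ∀ d, ((PowerSeries.coeff d F).denom.eval 0) ≠ 0)
    (hAhol : ∀ d, ((PowerSeries.coeff d A).denom.eval 0) ≠ 0)
    (hA0 : ∀ d, RatFunc.eval (RingHom.id ℚ) 0 (PowerSeries.coeff d A) = 0)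
    (hODE : ∑ r ∈ Finset.range (m + 1),
        PowerSeries.map (algebraMap ℚ (RatFunc ℚ)) (Cc r) * Dw^[r] F = A) :
    ∑ s ∈ Finset.range m,
        PowerSeries.map (algebraMap ℚ (RatFunc ℚ))
          (∑ r ∈ Finset.Icc (s + 1) m,
            (Nat.choose r (s + 1) : ℚ) • (Cc r * Dq^[r - 1 - s] (ev0 F))) *
          Dw^[s] (Mop F)
      = PowerSeries.C RatFunc.X⁻¹ * A := by
  classical
  have hFhol' : ∀ d, Holo (PowerSeries.coeff d F) := hFhol
  have hsub : ∀ r s : ℕ, r - 1 - s = r - (s + 1) := fun r s => by omega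
  set f := ev0 F with hf
  have hcoef_f : ∀ d, PowerSeries.coeff d f = ev (PowerSeries.coeff d F) := by
    intro d; rw [hf, ev0, PowerSeries.coeff_mk]; rfl
  have hf0 : PowerSeries.constantCoeff f ≠ 0 := by
    have h1 : PowerSeries.coeff 0 f = 1 := by
      rw [hcoef_f, hF1]; exact RatFunc.eval_one (RingHom.id ℚ) 0
    rw [← PowerSeries.coeff_zero_eq_constantCoeff, h1]; exact one_ne_zero
  set H := F * PowerSeries.map (algebraMap ℚ (RatFunc ℚ)) f⁻¹ with hH
  have hfH : PowerSeries.map (algebraMap ℚ (RatFunc ℚ)) f * H = F := by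
    rw [hH, mul_left_comm, ← map_mul, PowerSeries.mul_inv_cancel f hf0, map_one, mul_one]
  have hAco : ∀ d, PowerSeries.coeff d A
      = ∑ r ∈ Finset.range (m + 1), ∑ p ∈ Finset.HasAntidiagonal.antidiagonal d,
          algebraMap ℚ (RatFunc ℚ) (PowerSeries.coeff p.1 (Cc r)) *
            ((RatFunc.X + (p.2 : RatFunc ℚ)) ^ r * PowerSeries.coeff p.2 F) := by
    intro d
    rw [← hODE, map_sum]
    refine Finset.sum_congr rfl fun r _ => ?_
    rw [PowerSeries.coeff_mul]
    refine Finset.sum_congr rfl fun p _ => ?_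
    rw [PowerSeries.coeff_map, coeff_Dw_iter]
  have e1 : ∀ d, (∑ r ∈ Finset.range (m + 1), ∑ p ∈ Finset.HasAntidiagonal.antidiagonal d,
      PowerSeries.coeff p.1 (Cc r) * ((p.2 : ℚ) ^ r * PowerSeries.coeff p.2 f)) = 0 := by
    intro d
    rw [← hA0 d]
    show _ = ev _
    rw [hAco d,
      ev_sum _ _ (fun r _ => holo_sum _ _ fun p _ => holo_term _ _ _ (hFhol' p.2))]
    refine Finset.sum_congr rfl fun r _ => ?_
    rw [ev_sum _ _ (fun p _ => holo_term _ _ _ (hFhol' p.2))]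
    refine Finset.sum_congr rfl fun p _ => ?_
    rw [ev_term _ _ _ (hFhol' p.2), hcoef_f]
  have hSzero : ∑ r ∈ Finset.range (m + 1), Cc r * Dq^[r] f = 0 := by
    ext d
    rw [map_sum, map_zero, ← e1 d]
    refine Finset.sum_congr rfl fun r _ => ?_
    rw [PowerSeries.coeff_mul]
    refine Finset.sum_congr rfl fun p _ => ?_
    rw [coeff_Dq_iter]
  have hMop : ∀ s : ℕ, Dw^[s] (Mop F) = PowerSeries.C RatFunc.X⁻¹ * Dw^[s + 1] H := by
    intro s; ext d
    rw [coeff_Dw_iter, PowerSeries.coeff_C_mul, coeff_Dw_iter, Mop, PowerSeries.coeff_mk,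
      ← hf, ← hH, div_eq_mul_inv, pow_succ]
    ring
  have key : ∑ s ∈ Finset.range m, PowerSeries.map (algebraMap ℚ (RatFunc ℚ))
      (∑ r ∈ Finset.Icc (s + 1) m, (Nat.choose r (s + 1) : ℚ) • (Cc r * Dq^[r - 1 - s] f)) *
        Dw^[s + 1] H = A := by
    have hterm : ∀ s, PowerSeries.map (algebraMap ℚ (RatFunc ℚ))
        (∑ r ∈ Finset.Icc (s + 1) m, (Nat.choose r (s + 1) : ℚ) • (Cc r * Dq^[r - (s + 1)] f))
        = ∑ r ∈ Finset.Icc (s + 1) m,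
            PowerSeries.C (algebraMap ℚ (RatFunc ℚ) (Nat.choose r (s + 1) : ℚ)) *
              PowerSeries.map (algebraMap ℚ (RatFunc ℚ)) (Cc r * Dq^[r - (s + 1)] f) := by
      intro s
      rw [map_sum]
      refine Finset.sum_congr rfl fun r _ => ?_
      rw [PowerSeries.smul_eq_C_mul, map_mul, PowerSeries.map_C]
    simp only [hsub]
    simp only [hterm, Finset.sum_mul]
    rw [Finset.sum_comm' (t' := Finset.range (m + 1)) (s' := fun r => Finset.range r)
      (fun s r => by simp only [Finset.mem_range, Finset.mem_Icc]; omega)]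
    have hrow : ∀ r, (∑ s ∈ Finset.range r,
        PowerSeries.C (algebraMap ℚ (RatFunc ℚ) (Nat.choose r (s + 1) : ℚ)) *
          PowerSeries.map (algebraMap ℚ (RatFunc ℚ)) (Cc r * Dq^[r - (s + 1)] f) *
          Dw^[s + 1] H)
        = PowerSeries.map (algebraMap ℚ (RatFunc ℚ)) (Cc r) * Dw^[r] F
          - PowerSeries.map (algebraMap ℚ (RatFunc ℚ)) (Cc r * Dq^[r] f) * H := by
      intro r
      have hfull := Finset.sum_range_succ' (fun k =>
        PowerSeries.C (algebraMap ℚ (RatFunc ℚ) (Nat.choose r k : ℚ)) *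
          PowerSeries.map (algebraMap ℚ (RatFunc ℚ)) (Cc r * Dq^[r - k] f) * Dw^[k] H) r
      have hzero : PowerSeries.C (algebraMap ℚ (RatFunc ℚ) (Nat.choose r 0 : ℚ)) *
          PowerSeries.map (algebraMap ℚ (RatFunc ℚ)) (Cc r * Dq^[r - 0] f) * Dw^[0] H
          = PowerSeries.map (algebraMap ℚ (RatFunc ℚ)) (Cc r * Dq^[r] f) * H := by
        simp
      have hsumfull : (∑ k ∈ Finset.range (r + 1),
          PowerSeries.C (algebraMap ℚ (RatFunc ℚ) (Nat.choose r k : ℚ)) *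
            PowerSeries.map (algebraMap ℚ (RatFunc ℚ)) (Cc r * Dq^[r - k] f) * Dw^[k] H)
          = PowerSeries.map (algebraMap ℚ (RatFunc ℚ)) (Cc r) * Dw^[r] F := by
        rw [← hfH, leibniz, Finset.mul_sum]
        refine Finset.sum_congr rfl fun k _ => ?_
        rw [map_mul]
        ring
      rw [eq_sub_iff_add_eq, ← hzero, ← hfull, hsumfull]
    rw [Finset.sum_congr rfl fun r _ => hrow r, Finset.sum_sub_distrib, hODE,
      ← Finset.sum_mul, ← map_sum, hSzero, map_zero, zero_mul, sub_zero]
  calc ∑ s ∈ Finset.range m,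
        PowerSeries.map (algebraMap ℚ (RatFunc ℚ))
          (∑ r ∈ Finset.Icc (s + 1) m,
            (Nat.choose r (s + 1) : ℚ) • (Cc r * Dq^[r - 1 - s] f)) * Dw^[s] (Mop F)
      = ∑ s ∈ Finset.range m, PowerSeries.C RatFunc.X⁻¹ *
          (PowerSeries.map (algebraMap ℚ (RatFunc ℚ))
            (∑ r ∈ Finset.Icc (s + 1) m,
              (Nat.choose r (s + 1) : ℚ) • (Cc r * Dq^[r - 1 - s] f)) * Dw^[s + 1] H) := by
        refine Finset.sum_congr rfl fun s _ => ?_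
        rw [hMop s]; ring
    _ = PowerSeries.C RatFunc.X⁻¹ * A := by rw [← Finset.mul_sum, key]
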